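/- Let A be a commutative ℚ-algebra, M a free A-module of finite rank, and let C• be a cochain complex of A-modules equipped with a Hirsch extension differential: i.e., fix a map φ : M → Z^1(C•) into degree-1 cocycles, and endow Sym_A(M) ⊗_A C• with the differential d_H(m^{e} ⊗ c) extending d on C• by d_H(m ⊗ 1) = 1 ⊗ φ(m) via the Leibniz rule. If C• is acyclic, then the Hirsch extension Sym_A(M) ⊗_A C• is acyclic. -/

import Mathlib

open TensorProduct Finsupp

section Hirsch

variable {A : Type*} [CommRing A] [Algebra ℚ A] {r : ℕ}
  {C : ℤ → Type*} [∀ q, AddCommGroup (C q)] [∀ q, Module A (C q)]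

/-- total degree of a monomial exponent -/
def HEdeg (e : Fin r →₀ ℕ) : ℕ := e.sum fun _ v => v

lemma HEdeg_add_single (f : Fin r →₀ ℕ) (k : Fin r) :
    HEdeg (f + Finsupp.single k 1) = HEdeg f + 1 := by
  unfold HEdeg
  rw [Finsupp.sum_add_index (by simp) (by intros; rfl), Finsupp.sum_single_index rfl]

/-- The Hirsch differential transported to `(Fin r →₀ ℕ) →₀ C q`. -/
noncomputable def HED (d : ∀ q : ℤ, C q →ₗ[A] C (q + 1))
    (mulω : Fin r → ∀ q : ℤ, C q →ₗ[A] C (q + 1)) (q : ℤ) :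
    ((Fin r →₀ ℕ) →₀ C q) →ₗ[A] ((Fin r →₀ ℕ) →₀ C (q + 1)) :=
  Finsupp.lsum ℕ fun e =>
    (Finsupp.lsingle e ∘ₗ d q)
      + ∑ k : Fin r, (e k) • (Finsupp.lsingle (e - Finsupp.single k 1) ∘ₗ mulω k q)

variable (d : ∀ q : ℤ, C q →ₗ[A] C (q + 1))
  (mulω : Fin r → ∀ q : ℤ, C q →ₗ[A] C (q + 1))

lemma HED_single (q : ℤ) (e : Fin r →₀ ℕ) (c : C q) :
    HED d mulω q (Finsupp.single e c) =
      Finsupp.single e (d q c)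
        + ∑ k : Fin r, (e k) • Finsupp.single (e - Finsupp.single k 1) (mulω k q c) := by
  simp [HED]

lemma HED_apply (q : ℤ) (x : (Fin r →₀ ℕ) →₀ C q) (f : Fin r →₀ ℕ) :
    HED d mulω q x f =
      d q (x f) + ∑ k : Fin r, (f k + 1) • mulω k q (x (f + Finsupp.single k 1)) := by
  induction x using Finsupp.induction_linear with
  | zero => simp
  | add a b ha hb =>
      rw [map_add, Finsupp.add_apply, ha, hb]
      simp only [Finsupp.add_apply, map_add, smul_add, Finset.sum_add_distrib]
      abel
  | single e c =>
      rw [HED_single]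
      simp only [Finsupp.add_apply, Finsupp.coe_finset_sum, Finset.sum_apply,
        Finsupp.coe_smul, Pi.smul_apply, Finsupp.single_apply]
      congr 1
      · split_ifs with h <;> simp [h]
      · apply Finset.sum_congr rfl
        intro k _
        by_cases h : e = f + Finsupp.single k 1
        · have h1 : e - Finsupp.single k 1 = f := by
            rw [h]; exact add_tsub_cancel_right _ _
          have h2 : e k = f k + 1 := by
            rw [h, Finsupp.add_apply, Finsupp.single_apply]; simp
          rw [if_pos h1, h2, if_pos h]
        · rw [if_neg h]
          by_cases h1 : e - Finsupp.single k 1 = f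
          · have hek : e k = 0 := by
              by_contra hne
              have hle : Finsupp.single k 1 ≤ e := by
                rw [Finsupp.single_le_iff]; omega
              exact h (by rw [← h1, tsub_add_cancel_of_le hle])
            rw [if_pos h1, hek, zero_smul, map_zero, smul_zero]
          · rw [if_neg h1, map_zero, smul_zero, smul_zero]
end Hirsch

section Part2
variable {A : Type*} [CommRing A] [Algebra ℚ A] {r : ℕ}
  {C : ℤ → Type*} [∀ q, AddCommGroup (C q)] [∀ q, Module A (C q)]
  (d : ∀ q : ℤ, C q →ₗ[A] C (q + 1))
  (mulω : Fin r → ∀ q : ℤ, C q →ₗ[A] C (q + 1))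

lemma half_cancel (A : Type*) [CommRing A] [Algebra ℚ A] {V : Type*}
    [AddCommGroup V] [Module A V] (x : V) (h : x + x = 0) : x = 0 := by
  have h2 : (2 : A) • x = 0 := by rw [two_smul]; exact h
  have h3 : ((algebraMap ℚ A) (1/2) * 2) • x = 0 := by
    rw [mul_smul, h2, smul_zero]
  have h4 : ((algebraMap ℚ A) (1/2) * 2) = 1 := by
    have h5 : (2 : A) = algebraMap ℚ A 2 := by rw [map_ofNat]
    rw [h5, ← map_mul]
    norm_num
  rwa [h4, one_smul] at h3

lemma HED_sq (hd2 : ∀ q (c : C q), d (q + 1) (d q c) = 0)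
    (hLeib : ∀ k q (c : C q), d (q + 1) (mulω k q c) = - mulω k (q + 1) (d q c))
    (hanti : ∀ k l q (c : C q),
      mulω k (q + 1) (mulω l q c) = - mulω l (q + 1) (mulω k q c))
    (q : ℤ) (x : (Fin r →₀ ℕ) →₀ C q) :
    HED d mulω (q + 1) (HED d mulω q x) = 0 := by
  ext f
  rw [HED_apply, HED_apply]
  simp only [HED_apply, Finsupp.coe_zero, Pi.zero_apply]
  set T : Fin r → Fin r → C (q + 1 + 1) := fun k l =>
    (f k + 1) • ((((f + Finsupp.single k 1) : Fin r →₀ ℕ) l) + 1) •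
      mulω k (q + 1) (mulω l q (x (f + Finsupp.single k 1 + Finsupp.single l 1))) with hT
  have key : ∀ k l, T k l = - T l k := by
    intro k l
    have hcoef : (f k + 1) * ((((f + Finsupp.single k 1) : Fin r →₀ ℕ) l) + 1)
        = (f l + 1) * ((((f + Finsupp.single l 1) : Fin r →₀ ℕ) k) + 1) := by
      simp only [Finsupp.add_apply, Finsupp.single_apply]
      split_ifs with h1 h2 h2
      · subst h1; ring
      · exact absurd h1.symm h2
      · exact absurd h2.symm h1
      · ring
    have harg : f + Finsupp.single k 1 + Finsupp.single l 1
        = f + Finsupp.single l 1 + Finsupp.single k 1 := by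
      rw [add_assoc, add_assoc, add_comm (Finsupp.single k 1)]
    rw [hT]
    simp only [smul_smul, hcoef, hanti k l q, smul_neg, harg]
  have hS : ∑ k : Fin r, ∑ l : Fin r, T k l = 0 := by
    apply half_cancel A
    nth_rewrite 2 [Finset.sum_comm]
    rw [← Finset.sum_add_distrib]
    refine Finset.sum_eq_zero fun k _ => ?_
    rw [← Finset.sum_add_distrib]
    refine Finset.sum_eq_zero fun l _ => ?_
    rw [key k l]
    abel
  have h1 : d (q+1) (d q (x f) + ∑ k : Fin r, (f k + 1) •
        mulω k q (x (f + Finsupp.single k 1)))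
      = ∑ k : Fin r, (f k + 1) •
          (- mulω k (q+1) (d q (x (f + Finsupp.single k 1)))) := by
    rw [map_add, hd2, zero_add, map_sum]
    exact Finset.sum_congr rfl fun k _ => by rw [map_nsmul, hLeib]
  have h2 : ∀ k : Fin r, (f k + 1) • mulω k (q+1)
        (d q (x (f + Finsupp.single k 1)) + ∑ l : Fin r,
          ((((f + Finsupp.single k 1) : Fin r →₀ ℕ) l) + 1) •
            mulω l q (x (f + Finsupp.single k 1 + Finsupp.single l 1)))
      = (f k + 1) • mulω k (q+1) (d q (x (f + Finsupp.single k 1)))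
          + ∑ l : Fin r, T k l := by
    intro k
    rw [map_add, smul_add, map_sum, Finset.smul_sum]
    congr 1
    exact Finset.sum_congr rfl fun l _ => by rw [map_nsmul, hT]
  rw [h1, Finset.sum_congr rfl fun k _ => h2 k, Finset.sum_add_distrib,
    hS, add_zero, ← Finset.sum_add_distrib]
  exact Finset.sum_eq_zero fun k _ => by rw [smul_neg]; exact neg_add_cancel _
end Part2

section Part3
variable {A : Type*} [CommRing A] [Algebra ℚ A] {r : ℕ}
  {C : ℤ → Type*} [∀ q, AddCommGroup (C q)] [∀ q, Module A (C q)]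
  (d : ∀ q : ℤ, C q →ₗ[A] C (q + 1))
  (mulω : Fin r → ∀ q : ℤ, C q →ₗ[A] C (q + 1))

lemma HED_ker_sub (hd2 : ∀ q (c : C q), d (q + 1) (d q c) = 0)
    (hLeib : ∀ k q (c : C q), d (q + 1) (mulω k q c) = - mulω k (q + 1) (d q c))
    (hanti : ∀ k l q (c : C q),
      mulω k (q + 1) (mulω l q c) = - mulω l (q + 1) (mulω k q c))
    (hacyclic : ∀ q : ℤ, LinearMap.range (d q) = LinearMap.ker (d (q + 1)))
    (q : ℤ) :
    ∀ n : ℕ, ∀ x : (Fin r →₀ ℕ) →₀ C (q + 1), HED d mulω (q + 1) x = 0 →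
      (∀ e ∈ x.support, HEdeg e < n) → x ∈ LinearMap.range (HED d mulω q) := by
  intro n
  induction n with
  | zero =>
      intro x hx hdeg
      have hx0 : x = 0 := by
        ext e
        by_contra hne
        exact Nat.not_lt_zero _ (hdeg e (Finsupp.mem_support_iff.mpr hne))
      exact ⟨0, by rw [map_zero, hx0]⟩
  | succ n ih =>
      intro x hx hdeg
      classical
      have hclosed : ∀ e, HEdeg e = n → d (q+1) (x e) = 0 := by
        intro e he
        have h0 : (HED d mulω (q+1) x) e = 0 := by rw [hx]; rfl
        rw [HED_apply] at h0
        have hz : ∀ k : Fin r, x (e + Finsupp.single k 1) = 0 := by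
          intro k
          by_contra hne
          have := hdeg _ (Finsupp.mem_support_iff.mpr hne)
          rw [HEdeg_add_single, he] at this
          omega
        simpa only [hz, map_zero, smul_zero, Finset.sum_const_zero, add_zero] using h0
      set S := x.support.filter (fun e => HEdeg e = n) with hSdef
      have hex : ∀ e : Fin r →₀ ℕ, ∃ c : C q, (e ∈ S → d q c = x e) := by
        intro e
        by_cases he : e ∈ S
        · have he' : HEdeg e = n := (Finset.mem_filter.mp he).2
          have hm : x e ∈ LinearMap.ker (d (q+1)) := hclosed e he'
          rw [← hacyclic q] at hm
          obtain ⟨c, hc⟩ := hm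
          exact ⟨c, fun _ => hc⟩
        · exact ⟨0, fun h => absurd h he⟩
      choose b hb using hex
      set y : (Fin r →₀ ℕ) →₀ C q := ∑ e ∈ S, Finsupp.single e (b e) with hydef
      have hy_apply : ∀ f, y f = if f ∈ S then b f else 0 := by
        intro f
        rw [hydef, Finsupp.finset_sum_apply]
        by_cases h : f ∈ S
        · rw [Finset.sum_eq_single_of_mem f h
            (fun e _ hne => Finsupp.single_eq_of_ne' hne),
            Finsupp.single_eq_same, if_pos h]
        · rw [if_neg h]
          exact Finset.sum_eq_zero fun e heS =>
            Finsupp.single_eq_of_ne' (fun heq => h (heq ▸ heS))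
      set x' := x - HED d mulω q y with hx'def
      have hker' : HED d mulω (q+1) x' = 0 := by
        rw [hx'def, map_sub, hx, HED_sq d mulω hd2 hLeib hanti, sub_zero]
      have hdeg' : ∀ f ∈ x'.support, HEdeg f < n := by
        intro f hf
        by_contra hge
        push_neg at hge
        apply Finsupp.mem_support_iff.mp hf
        rw [hx'def, Finsupp.sub_apply, HED_apply]
        have hy2 : ∀ k : Fin r, y (f + Finsupp.single k 1) = 0 := by
          intro k
          rw [hy_apply, if_neg]
          intro hmem
          have := (Finset.mem_filter.mp hmem).2
          rw [HEdeg_add_single] at this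
          omega
        simp only [hy2, map_zero, smul_zero, Finset.sum_const_zero, add_zero]
        rcases Nat.lt_or_ge n (HEdeg f) with hgt | hle
        · have hxf : x f = 0 := by
            by_contra hne
            have := hdeg f (Finsupp.mem_support_iff.mpr hne)
            omega
          have hyf : y f = 0 := by
            rw [hy_apply, if_neg]
            intro hmem
            have := (Finset.mem_filter.mp hmem).2
            omega
          rw [hxf, hyf, map_zero, sub_zero]
        · have hfn : HEdeg f = n := le_antisymm hle hge
          by_cases hfS : f ∈ S
          · rw [hy_apply, if_pos hfS, hb f hfS, sub_self]
          · have hxf : x f = 0 := by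
              by_contra hne
              exact hfS (Finset.mem_filter.mpr
                ⟨Finsupp.mem_support_iff.mpr hne, hfn⟩)
            rw [hy_apply, if_neg hfS, hxf, map_zero, sub_zero]
      obtain ⟨z, hz⟩ := ih x' hker' hdeg'
      exact ⟨z + y, by rw [map_add, hz, hx'def, sub_add_cancel]⟩

lemma HED_exact (hd2 : ∀ q (c : C q), d (q + 1) (d q c) = 0)
    (hLeib : ∀ k q (c : C q), d (q + 1) (mulω k q c) = - mulω k (q + 1) (d q c))
    (hanti : ∀ k l q (c : C q),
      mulω k (q + 1) (mulω l q c) = - mulω l (q + 1) (mulω k q c))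
    (hacyclic : ∀ q : ℤ, LinearMap.range (d q) = LinearMap.ker (d (q + 1)))
    (q : ℤ) :
    LinearMap.range (HED d mulω q) = LinearMap.ker (HED d mulω (q + 1)) := by
  apply le_antisymm
  · rintro _ ⟨x, rfl⟩
    exact LinearMap.mem_ker.mpr (HED_sq d mulω hd2 hLeib hanti q x)
  · intro x hx
    exact HED_ker_sub d mulω hd2 hLeib hanti hacyclic q
      (x.support.sup HEdeg + 1) x (LinearMap.mem_ker.mp hx)
      (fun e he => Nat.lt_succ_of_le (Finset.le_sup he))
end Part3

section Part4
variable {A : Type*} [CommRing A] [Algebra ℚ A] {r : ℕ}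
  {C : ℤ → Type*} [∀ q, AddCommGroup (C q)] [∀ q, Module A (C q)]

/-- The identification of `A[u_1,…,u_r] ⊗[A] C q` with finitely supported families of
elements of `C q` indexed by monomials. -/
noncomputable def HEiso (q : ℤ) :
    (MvPolynomial (Fin r) A ⊗[A] C q) ≃ₗ[A] ((Fin r →₀ ℕ) →₀ C q) :=
  (TensorProduct.congr (MvPolynomial.basisMonomials (Fin r) A).repr
    (LinearEquiv.refl A (C q))).trans
    (TensorProduct.finsuppScalarLeft A (C q) (Fin r →₀ ℕ))

lemma HEiso_tmul (q : ℤ) (e : Fin r →₀ ℕ) (a : A) (c : C q) :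
    HEiso (A := A) (r := r) (C := C) q ((MvPolynomial.monomial e) a ⊗ₜ[A] c) = Finsupp.single e (a • c) := by
  have hrepr : (MvPolynomial.basisMonomials (Fin r) A).repr ((MvPolynomial.monomial e) a)
      = Finsupp.single e a := rfl
  ext i
  rw [HEiso, LinearEquiv.trans_apply, TensorProduct.congr_tmul, hrepr,
    LinearEquiv.refl_apply, TensorProduct.finsuppScalarLeft_apply_tmul_apply,
    Finsupp.single_apply, Finsupp.single_apply]
  split_ifs <;> simp

variable (d : ∀ q : ℤ, C q →ₗ[A] C (q + 1))
  (mulω : Fin r → ∀ q : ℤ, C q →ₗ[A] C (q + 1))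

lemma HEiso_comm
    (dH : ∀ q : ℤ,
      (MvPolynomial (Fin r) A ⊗[A] C q) →ₗ[A] (MvPolynomial (Fin r) A ⊗[A] C (q + 1)))
    (hdH : ∀ q, dH q =
      (∑ k : Fin r, TensorProduct.map (MvPolynomial.pderiv k).toLinearMap (mulω k q))
        + TensorProduct.map LinearMap.id (d q)) (q : ℤ) :
    (HEiso (A := A) (r := r) (C := C) (q+1)).toLinearMap ∘ₗ dH q
      = HED d mulω q ∘ₗ (HEiso (A := A) (r := r) (C := C) q).toLinearMap := by
  apply TensorProduct.ext'
  intro p c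
  induction p using MvPolynomial.induction_on' with
  | add p1 p2 h1 h2 =>
      simp only [LinearMap.comp_apply, LinearEquiv.coe_coe] at h1 h2 ⊢
      rw [add_tmul, map_add, map_add, h1, h2, ← map_add, ← map_add]
  | monomial e a =>
      simp only [LinearMap.comp_apply, LinearEquiv.coe_coe]
      rw [hdH q, LinearMap.add_apply, LinearMap.sum_apply, HEiso_tmul, HED_single]
      simp only [TensorProduct.map_tmul, LinearMap.id_coe, id_eq,
        Derivation.coeFn_coe, MvPolynomial.pderiv_monomial]
      have hL : ∀ k : Fin r, HEiso (A := A) (r := r) (C := C) (q+1)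
          ((MvPolynomial.monomial (e - Finsupp.single k 1)) (a * ((e k : A)))
            ⊗ₜ[A] (mulω k q) c)
          = e k • Finsupp.single (e - Finsupp.single k 1) (a • mulω k q c) := by
        intro k
        rw [HEiso_tmul, mul_comm a ((e k : A)), mul_smul, Nat.cast_smul_eq_nsmul,
          ← Finsupp.smul_single]
      rw [map_add, map_sum, HEiso_tmul]
      simp only [map_smul]
      simp only [hL]
      exact add_comm _ _
end Part4

/-- Let `A` be a commutative `ℚ`-algebra, `M = A^r` a free `A`-module of finite rank, and
`C•` a cochain complex of `A`-modules which is a dg-module, with fixed degree-one cocycles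
`φ(m_1), …, φ(m_r)` acting via the operators `mulω k`.  Endow
`Sym_A(M) ⊗_A C• = A[u_1,…,u_r] ⊗_A C•` with the Hirsch extension differential
`d_H = Σ_k ∂/∂u_k ⊗ (φ(m_k) ∧ ·) + id ⊗ d`.  If `C•` is acyclic, then the Hirsch
extension is acyclic. -/
theorem hirsch_extension_of_acyclic_is_acyclic
    (A : Type*) [CommRing A] [Algebra ℚ A] (r : ℕ)
    (C : ℤ → Type*) [∀ q, AddCommGroup (C q)] [∀ q, Module A (C q)]
    (d : ∀ q : ℤ, C q →ₗ[A] C (q + 1))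
    (hd2 : ∀ q (c : C q), d (q + 1) (d q c) = 0)
    -- left multiplication by the degree-one cocycles `φ(m_k)` on the dg-module `C•`:
    (mulω : Fin r → ∀ q : ℤ, C q →ₗ[A] C (q + 1))
    (hLeib : ∀ k q (c : C q), d (q + 1) (mulω k q c) = - mulω k (q + 1) (d q c))
    (hanti : ∀ k l q (c : C q),
      mulω k (q + 1) (mulω l q c) = - mulω l (q + 1) (mulω k q c))
    -- the Hirsch extension differential on `Sym_A(M) ⊗_A C•`:
    (dH : ∀ q : ℤ,
      (MvPolynomial (Fin r) A ⊗[A] C q) →ₗ[A] (MvPolynomial (Fin r) A ⊗[A] C (q + 1)))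
    (hdH : ∀ q, dH q =
      (∑ k : Fin r, TensorProduct.map (MvPolynomial.pderiv k).toLinearMap (mulω k q))
        + TensorProduct.map LinearMap.id (d q))
    (hacyclic : ∀ q : ℤ, LinearMap.range (d q) = LinearMap.ker (d (q + 1))) :
    ∀ q : ℤ, LinearMap.range (dH q) = LinearMap.ker (dH (q + 1)) := by
  intro q
  have hrep : ∀ q' : ℤ, dH q' = ((HEiso (A := A) (r := r) (C := C) (q'+1)).symm.toLinearMap ∘ₗ
      (HED d mulω q')) ∘ₗ (HEiso (A := A) (r := r) (C := C) q').toLinearMap := by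
    intro q'
    rw [LinearMap.comp_assoc, ← HEiso_comm d mulω dH hdH q', ← LinearMap.comp_assoc]
    have hid : (HEiso (A := A) (r := r) (C := C) (q'+1)).symm.toLinearMap
        ∘ₗ (HEiso (A := A) (r := r) (C := C) (q'+1)).toLinearMap = LinearMap.id := by
      apply LinearMap.ext
      intro v
      simp only [LinearMap.comp_apply, LinearEquiv.coe_coe,
        LinearEquiv.symm_apply_apply, LinearMap.id_apply]
    rw [hid, LinearMap.id_comp]
  rw [hrep q, hrep (q+1)]
  rw [LinearMap.range_comp, LinearEquiv.range, Submodule.map_top,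
    LinearMap.range_comp, LinearMap.ker_comp,
    LinearMap.ker_comp_of_ker_eq_bot _ (LinearEquiv.ker _),
    HED_exact d mulω hd2 hLeib hanti hacyclic q,
    Submodule.comap_equiv_eq_map_symm]
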